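/- Let W > 0, q ∈ (0,1), v₀ > W be fixed, and for z ∈ [0,1) define S(z) = (v₀ - W)/(1-q) - zW/(1-z) and T(z) = 1/(1-q) + z/(1-z) if S(z) ≥ 0, with T(z) = 0 and S(z) = 0 (non-participation) if S(z) < 0. Then the value z_T = 1 - W/((v₀-W)/(1-q) + W) maximizes T over [0,1), and at z = z_T the utility satisfies S(z_T) = 0. -/

import Mathlib

open Set

theorem stmt_0 (W q v₀ : ℝ) (hW : 0 < W) (hq : q ∈ Ioo (0:ℝ) 1) (hv : W < v₀)
    (S T : ℝ → ℝ)
    (hS : ∀ z, S z = if 0 ≤ (v₀ - W) / (1 - q) - z * W / (1 - z)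
      then (v₀ - W) / (1 - q) - z * W / (1 - z) else 0)
    (hT : ∀ z, T z = if 0 ≤ (v₀ - W) / (1 - q) - z * W / (1 - z)
      then 1 / (1 - q) + z / (1 - z) else 0)
    (zT : ℝ) (hzT : zT = 1 - W / ((v₀ - W) / (1 - q) + W)) :
    zT ∈ Ico (0:ℝ) 1 ∧ (∀ z ∈ Ico (0:ℝ) 1, T z ≤ T zT) ∧ S zT = 0 := by
  obtain ⟨hq0, hq1⟩ := hq
  have h1q : 0 < 1 - q := by linarith
  set A := (v₀ - W) / (1 - q) with hA_def
  have hA : 0 < A := div_pos (by linarith) h1q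
  have hAW : 0 < A + W := by linarith
  have hzT' : zT = A / (A + W) := by
    rw [hzT]; field_simp; ring
  have hzT0 : 0 ≤ zT := by rw [hzT']; positivity
  have hzT1 : zT < 1 := by rw [hzT', div_lt_one hAW]; linarith
  have h1zT : 1 - zT = W / (A + W) := by
    rw [hzT']; field_simp; ring
  have hkey : A - zT * W / (1 - zT) = 0 := by
    rw [h1zT, hzT']; field_simp; ring
  have hratio : zT / (1 - zT) = A / W := by
    rw [h1zT, hzT']; field_simp
  have hTzT : T zT = 1 / (1 - q) + zT / (1 - zT) := by
    rw [hT, if_pos (le_of_eq hkey.symm)]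
  refine ⟨⟨hzT0, hzT1⟩, ?_, ?_⟩
  · intro z hz
    obtain ⟨hz0, hz1⟩ := hz
    have h1z : 0 < 1 - z := by linarith
    rw [hT z]
    by_cases hc : 0 ≤ A - z * W / (1 - z)
    · rw [if_pos hc, hTzT, hratio]
      have h2 : z * W / (1 - z) ≤ A := by linarith
      rw [div_le_iff₀ h1z] at h2
      have : z / (1 - z) ≤ A / W := by
        rw [div_le_div_iff₀ h1z hW]; linarith
      linarith
    · rw [if_neg hc, hTzT]
      have h1 : 0 ≤ 1 / (1 - q) := by positivity
      have h2 : 0 ≤ zT / (1 - zT) := by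
        apply div_nonneg hzT0; linarith
      linarith
  · rw [hS, if_pos (le_of_eq hkey.symm)]; exact hkey
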